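/- Let n ∈ ℝ³ be a unit vector and B = -iβ(α·n). If v, w ∈ ℂ⁴ satisfy Bv = v and Bw = w, then ⟨(-i α·n) v, w⟩_{ℂ⁴} = 0. -/

import Mathlib

open Matrix Complex

/-- The three Pauli matrices. -/
noncomputable def pauli : Fin 3 → Matrix (Fin 2) (Fin 2) ℂ :=
  ![!![0, 1; 1, 0], !![0, -I; I, 0], !![1, 0; 0, -1]]

/-- The Dirac matrices `αⱼ = [[0, σⱼ], [σⱼ, 0]]`. -/
noncomputable def diracAlpha (j : Fin 3) :
    Matrix (Fin 2 ⊕ Fin 2) (Fin 2 ⊕ Fin 2) ℂ :=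
  Matrix.fromBlocks 0 (pauli j) (pauli j) 0

/-- The Dirac matrix `β = [[I₂, 0], [0, -I₂]]`. -/
noncomputable def diracBeta : Matrix (Fin 2 ⊕ Fin 2) (Fin 2 ⊕ Fin 2) ℂ :=
  Matrix.fromBlocks 1 0 0 (-1)

/-- `α · x = x₁α₁ + x₂α₂ + x₃α₃`. -/
noncomputable def alphaDot (x : EuclideanSpace ℝ (Fin 3)) :
    Matrix (Fin 2 ⊕ Fin 2) (Fin 2 ⊕ Fin 2) ℂ :=
  ∑ j : Fin 3, (x j : ℂ) • diracAlpha j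


/-- The MIT bag boundary matrix `B = -iβ(α·n)`. -/
noncomputable def mitB (n : EuclideanSpace ℝ (Fin 3)) :
    Matrix (Fin 2 ⊕ Fin 2) (Fin 2 ⊕ Fin 2) ℂ :=
  (-I) • (diracBeta * alphaDot n)

lemma beta_sq : diracBeta * diracBeta = 1 := by
  simp [diracBeta, Matrix.fromBlocks_multiply, ← Matrix.fromBlocks_one]

lemma alpha_beta_anticomm (j : Fin 3) :
    diracAlpha j * diracBeta = -(diracBeta * diracAlpha j) := by
  simp [diracAlpha, diracBeta, Matrix.fromBlocks_multiply, Matrix.fromBlocks_neg]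

lemma alphaDot_beta_anticomm (n : EuclideanSpace ℝ (Fin 3)) :
    alphaDot n * diracBeta = -(diracBeta * alphaDot n) := by
  simp [alphaDot, Finset.sum_mul, Finset.mul_sum, Matrix.smul_mul, Matrix.mul_smul,
    alpha_beta_anticomm, Finset.sum_neg_distrib]

lemma pauli_herm (j : Fin 3) : (pauli j)ᴴ = pauli j := by
  fin_cases j <;> ext i k <;> fin_cases i <;> fin_cases k <;>
    simp [pauli, Matrix.conjTranspose_apply]

lemma beta_herm : diracBetaᴴ = diracBeta := by
  simp [diracBeta, Matrix.fromBlocks_conjTranspose]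

lemma alphaDot_herm (n : EuclideanSpace ℝ (Fin 3)) : (alphaDot n)ᴴ = alphaDot n := by
  simp [alphaDot, Matrix.conjTranspose_sum, Matrix.conjTranspose_smul, diracAlpha,
    Matrix.fromBlocks_conjTranspose, pauli_herm, Complex.conj_ofReal]

lemma mitB_herm (n : EuclideanSpace ℝ (Fin 3)) : (mitB n)ᴴ = mitB n := by
  simp [mitB, Matrix.conjTranspose_smul, Matrix.conjTranspose_mul, beta_herm,
    alphaDot_herm, alphaDot_beta_anticomm, smul_neg]

lemma beta_mitB (n : EuclideanSpace ℝ (Fin 3)) :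
    diracBeta * mitB n = (-I) • alphaDot n := by
  simp [mitB, Matrix.mul_smul, ← Matrix.mul_assoc, beta_sq]

lemma mitB_beta (n : EuclideanSpace ℝ (Fin 3)) :
    mitB n * diracBeta = -((-I) • alphaDot n) := by
  rw [mitB, Matrix.smul_mul, Matrix.mul_assoc, alphaDot_beta_anticomm, Matrix.mul_neg,
    ← Matrix.mul_assoc, beta_sq, Matrix.one_mul]
  simp

/-- If `Bv = v` and `Bw = w` then `⟨(-i α·n) v, w⟩ = 0`. -/
theorem mitB_boundary_vanishing (n : EuclideanSpace ℝ (Fin 3)) (hn : ‖n‖ = 1)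
    (v w : EuclideanSpace ℂ (Fin 2 ⊕ Fin 2))
    (hv : (mitB n).mulVec ((WithLp.equiv 2 ((Fin 2 ⊕ Fin 2) → ℂ)) v) =
      (WithLp.equiv 2 ((Fin 2 ⊕ Fin 2) → ℂ)) v)
    (hw : (mitB n).mulVec ((WithLp.equiv 2 ((Fin 2 ⊕ Fin 2) → ℂ)) w) =
      (WithLp.equiv 2 ((Fin 2 ⊕ Fin 2) → ℂ)) w) :
    inner ℂ ((WithLp.equiv 2 ((Fin 2 ⊕ Fin 2) → ℂ)).symm
        (((-I) • alphaDot n).mulVec ((WithLp.equiv 2 ((Fin 2 ⊕ Fin 2) → ℂ)) v))) w = (0 : ℂ) := by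
  
  set x := (WithLp.equiv 2 ((Fin 2 ⊕ Fin 2) → ℂ)) v with hx
  set y := (WithLp.equiv 2 ((Fin 2 ⊕ Fin 2) → ℂ)) w with hy
  rw [EuclideanSpace.inner_eq_star_dotProduct]
  rw [dotProduct_comm]
  show star (((-I) • alphaDot n).mulVec x) ⬝ᵥ y = 0
  -- goal : star (((-I) • alphaDot n).mulVec x) ⬝ᵥ y = 0
  have key : ∀ u : (Fin 2 ⊕ Fin 2) → ℂ,
      star u ⬝ᵥ (mitB n).mulVec y = star ((mitB n).mulVec u) ⬝ᵥ y := by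
    intro u
    rw [Matrix.dotProduct_mulVec, Matrix.star_mulVec, mitB_herm]
  have hMv : ((-I) • alphaDot n).mulVec x = diracBeta.mulVec x := by
    rw [← beta_mitB, ← Matrix.mulVec_mulVec, hv]
  have hc : star (diracBeta.mulVec x) ⬝ᵥ y = -(star (diracBeta.mulVec x) ⬝ᵥ y) := by
    conv_lhs => rw [← hw, key, Matrix.mulVec_mulVec, mitB_beta, Matrix.neg_mulVec, hMv]
    simp
  have : star (diracBeta.mulVec x) ⬝ᵥ y = 0 := by linear_combination (hc) / 2 -- maybe
  rw [hMv, this]
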